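/- Let N ≥ 2, and let (w¹, P¹) (with K₁ ≥ 1 cells) and (w², P²) (with K₂ ≥ 1 cells) be two configurations on the same N classes, with confidences e₁ and e₂ and base-2 entropy impurities I₁ = ∑_k ∑_i w¹ k · (−P¹ k i · logb 2 (P¹ k i)) and I₂ = ∑_k ∑_i w² k · (−P² k i · logb 2 (P² k i)) (with 0·logb 2 0 interpreted as 0). Suppose e₂ ≤ e₁ < 1 and logb 2 N ≥ S(e₁), where S(e) = ((1−e) + sqrt(4·H(e)·(−logb 2 e) + (1−e)²)) / (−2·logb 2 e) and H(e) = −(e·logb 2 e + (1−e)·logb 2 (1−e)). Then I₁ ≤ (logb 2 N)²·I₂. (Paper's Theorem 9: under the condition N ≥ 2^{S(e^max)}, the maximum-likelihood algorithm is a log²N-approximation for entropy impurity minimization.) -/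

import Mathlib

open Finset

/-- The maximum of a real-valued vector over the finite index set `Fin N` (`N > 0`). -/
noncomputable def colMax {N : ℕ} (hN : 0 < N) (v : Fin N → ℝ) : ℝ :=
  Finset.univ.sup' (Finset.univ_nonempty_iff.mpr ⟨⟨0, hN⟩⟩) v

lemma gibbs_term {p q : ℝ} (hp : 0 ≤ p) (hq : 0 < q) :
    p * Real.log q - p * Real.log p ≤ q - p := by
  rcases eq_or_lt_of_le hp with h | h
  · simp [← h]; exact hq.le
  · have h1 : Real.log (q / p) ≤ q / p - 1 := Real.log_le_sub_one_of_pos (by positivity)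
    rw [Real.log_div hq.ne' h.ne'] at h1
    have h2 := mul_le_mul_of_nonneg_left h1 hp
    have h3 : p * (q / p - 1) = q - p := by field_simp
    nlinarith [h2, h3]

lemma col_basic {N : ℕ} (hN : 0 < N) (p : Fin N → ℝ) (hp : ∀ i, 0 ≤ p i)
    (hs : ∑ i, p i = 1) :
    (∀ i, p i ≤ colMax hN p) ∧ 1 / (N : ℝ) ≤ colMax hN p ∧ colMax hN p ≤ 1 := by
  have hle : ∀ i, p i ≤ colMax hN p := fun i => Finset.le_sup' p (mem_univ i)
  obtain ⟨j, _, hj⟩ := Finset.exists_mem_eq_sup'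
    (Finset.univ_nonempty_iff.mpr ⟨⟨0, hN⟩⟩) p
  refine ⟨hle, ?_, ?_⟩
  · have h1 : (1 : ℝ) ≤ N * colMax hN p := by
      calc (1:ℝ) = ∑ i, p i := hs.symm
      _ ≤ ∑ _i : Fin N, colMax hN p := Finset.sum_le_sum fun i _ => hle i
      _ = N * colMax hN p := by simp [mul_comm]
    rw [div_le_iff₀ (by positivity)]
    linarith [h1]
  · rw [colMax, hj]
    calc p j ≤ ∑ i, p i := Finset.single_le_sum (fun i _ => hp i) (mem_univ j)
    _ = 1 := hs

/-- Fano-type upper bound on entropy. -/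
lemma ent_upper {N : ℕ} (hN : 2 ≤ N) (p : Fin N → ℝ) (hp : ∀ i, 0 ≤ p i)
    (hs : ∑ i, p i = 1) (hN0 : 0 < N) :
    ∑ i, Real.negMulLog (p i) ≤ Real.negMulLog (colMax hN0 p) +
      Real.negMulLog (1 - colMax hN0 p) + (1 - colMax hN0 p) * Real.log N := by
  obtain ⟨hle, hm0, hm1⟩ := col_basic hN0 p hp hs
  set m := colMax hN0 p with hmdef
  obtain ⟨j, _, hj⟩ := Finset.exists_mem_eq_sup'
    (Finset.univ_nonempty_iff.mpr ⟨⟨0, hN0⟩⟩) p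
  have hjm : p j = m := hj.symm
  have hmpos : 0 < m := lt_of_lt_of_le (by positivity) hm0
  rcases eq_or_lt_of_le hm1 with hm1' | hm1'
  · -- m = 1 : all other entries are 0
    have hrest : ∑ i ∈ univ.erase j, p i = 0 := by
      have := Finset.add_sum_erase univ p (mem_univ j)
      rw [hs, hjm, hm1'] at this
      linarith
    have hzero : ∀ i ∈ univ.erase j, p i = 0 :=
      (Finset.sum_eq_zero_iff_of_nonneg (fun i _ => hp i)).mp hrest
    have hL : ∑ i, Real.negMulLog (p i) = 0 := by
      rw [← Finset.add_sum_erase univ _ (mem_univ j), hjm, hm1']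
      rw [Finset.sum_eq_zero (fun i hi => by rw [hzero i hi]; simp)]
      simp
    rw [hL, hm1']
    simp [Real.negMulLog]
  · -- m < 1
    set q : Fin N → ℝ := fun i => if i = j then m else (1 - m) / ((N : ℝ) - 1) with hqdef
    have hN1 : (1:ℝ) ≤ (N:ℝ) - 1 := by
      have : (2:ℝ) ≤ (N:ℝ) := by exact_mod_cast hN
      linarith
    have hqpos : ∀ i, 0 < q i := by
      intro i
      rcases eq_or_ne i j with h | h
      · simpa [hqdef, h] using hmpos
      · have h0 : (0:ℝ) < (1 - m) / ((N:ℝ) - 1) := div_pos (by linarith) (by linarith)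
        simpa [hqdef, h] using h0
    have hqsum : ∑ i, q i = 1 := by
      rw [← Finset.add_sum_erase univ q (mem_univ j)]
      have h1 : q j = m := by simp [hqdef]
      have hcard : (univ.erase j).card = N - 1 := by
        rw [Finset.card_erase_of_mem (mem_univ j), Finset.card_univ, Fintype.card_fin]
      have h2 : ∑ i ∈ univ.erase j, q i = ((N:ℝ) - 1) * ((1 - m) / ((N:ℝ) - 1)) := by
        calc ∑ i ∈ univ.erase j, q i = ∑ _i ∈ univ.erase j, (1 - m) / ((N:ℝ) - 1) :=
              Finset.sum_congr rfl (fun i hi => by simp [hqdef, Finset.ne_of_mem_erase hi])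
          _ = ((univ.erase j).card : ℝ) * ((1 - m) / ((N:ℝ) - 1)) := by
              rw [Finset.sum_const, nsmul_eq_mul]
          _ = ((N:ℝ) - 1) * ((1 - m) / ((N:ℝ) - 1)) := by
              rw [hcard]
              congr 1
              push_cast [Nat.cast_sub (by omega : 1 ≤ N)]
              ring
      rw [h1, h2]
      field_simp
      ring
    have hgibbs : ∑ i, (p i * Real.log (q i) - p i * Real.log (p i)) ≤ 0 := by
      calc ∑ i, (p i * Real.log (q i) - p i * Real.log (p i))
          ≤ ∑ i, (q i - p i) := Finset.sum_le_sum fun i _ => gibbs_term (hp i) (hqpos i)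
        _ = 0 := by rw [Finset.sum_sub_distrib, hs, hqsum]; ring
    have hqlog : ∑ i, p i * Real.log (q i) =
        m * Real.log m + (1 - m) * (Real.log (1 - m) - Real.log ((N:ℝ) - 1)) := by
      rw [← Finset.add_sum_erase univ _ (mem_univ j)]
      have h1 : p j * Real.log (q j) = m * Real.log m := by simp [hqdef, hjm]
      have h2 : ∑ i ∈ univ.erase j, p i * Real.log (q i) =
          (1 - m) * (Real.log (1 - m) - Real.log ((N:ℝ) - 1)) := by
        have hrest : ∑ i ∈ univ.erase j, p i = 1 - m := by
          have := Finset.add_sum_erase univ p (mem_univ j)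
          rw [hs, hjm] at this
          linarith
        calc ∑ i ∈ univ.erase j, p i * Real.log (q i)
            = ∑ i ∈ univ.erase j, p i * (Real.log (1 - m) - Real.log ((N:ℝ) - 1)) :=
              Finset.sum_congr rfl (fun i hi => by
                have : q i = (1 - m) / ((N:ℝ) - 1) := by
                  simp [hqdef, Finset.ne_of_mem_erase hi]
                rw [this, Real.log_div (by linarith) (by linarith)])
          _ = (1 - m) * (Real.log (1 - m) - Real.log ((N:ℝ) - 1)) := by
              rw [← Finset.sum_mul, hrest]
      rw [h1, h2]
    have hNlog : Real.log ((N:ℝ) - 1) ≤ Real.log N := by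
      apply Real.log_le_log (by linarith)
      linarith
    have hent : ∑ i, Real.negMulLog (p i) = - ∑ i, p i * Real.log (p i) := by
      simp [Real.negMulLog, Finset.sum_neg_distrib]
    have key : - ∑ i, p i * Real.log (p i) ≤ - ∑ i, p i * Real.log (q i) := by
      have := hgibbs
      rw [Finset.sum_sub_distrib] at this
      linarith
    rw [hent]
    calc - ∑ i, p i * Real.log (p i) ≤ - ∑ i, p i * Real.log (q i) := key
      _ = Real.negMulLog m + Real.negMulLog (1 - m) + (1 - m) * Real.log ((N:ℝ) - 1) := by
          rw [hqlog]; simp [Real.negMulLog]; ring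
      _ ≤ Real.negMulLog m + Real.negMulLog (1 - m) + (1 - m) * Real.log N := by
          have := mul_le_mul_of_nonneg_left hNlog (by linarith : (0:ℝ) ≤ 1 - m)
          linarith

/-- Min-entropy lower bound. -/
lemma ent_lower {N : ℕ} (hN0 : 0 < N) (p : Fin N → ℝ) (hp : ∀ i, 0 ≤ p i)
    (hs : ∑ i, p i = 1) :
    - Real.log (colMax hN0 p) ≤ ∑ i, Real.negMulLog (p i) := by
  obtain ⟨hle, hm0, _⟩ := col_basic hN0 p hp hs
  set m := colMax hN0 p
  have hmpos : 0 < m := lt_of_lt_of_le (by positivity) hm0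
  have term : ∀ i, p i * (- Real.log m) ≤ Real.negMulLog (p i) := by
    intro i
    rcases eq_or_lt_of_le (hp i) with h | h
    · simp [← h]
    · have : Real.log (p i) ≤ Real.log m := Real.log_le_log h (hle i)
      rw [Real.negMulLog]
      nlinarith [this, h]
  calc - Real.log m = ∑ i, p i * (- Real.log m) := by rw [← Finset.sum_mul, hs]; ring
    _ ≤ ∑ i, Real.negMulLog (p i) := Finset.sum_le_sum fun i _ => term i

lemma alg_core {c H g L : ℝ} (hc : 0 ≤ c) (hH : 0 ≤ H) (hg : 0 < g)
    (hcond : (c + Real.sqrt (4 * H * g + c ^ 2)) / (2 * g) ≤ L) :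
    c * L + H ≤ g * L ^ 2 := by
  have hD : 0 ≤ 4 * H * g + c ^ 2 := by positivity
  have hs := Real.sq_sqrt hD
  have hsn := Real.sqrt_nonneg (4 * H * g + c ^ 2)
  have hc2 := (div_le_iff₀ (by linarith : (0:ℝ) < 2 * g)).mp hcond
  nlinarith [hc2, hs, hsn, hg, sq_nonneg (Real.sqrt (4 * H * g + c ^ 2) - (L * (2 * g) - c))]

set_option maxHeartbeats 1000000 in
/-- Paper's Theorem 9: if `e₂ ≤ e₁ < 1` and `log₂ N ≥ S(e₁)`, then the base-2 entropy
impurity `I₁` of the first configuration is at most `(log₂ N)²` times the impurity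
`I₂` of the second. -/
theorem entropy_log_square_approximation (N K₁ K₂ : ℕ) (hN : 2 ≤ N)
    (hK₁ : 1 ≤ K₁) (hK₂ : 1 ≤ K₂)
    (w₁ : Fin K₁ → ℝ) (hw₁ : ∀ k, 0 ≤ w₁ k) (hws₁ : ∑ k, w₁ k = 1)
    (P₁ : Fin K₁ → Fin N → ℝ) (hP₁ : ∀ k i, 0 ≤ P₁ k i) (hPs₁ : ∀ k, ∑ i, P₁ k i = 1)
    (w₂ : Fin K₂ → ℝ) (hw₂ : ∀ k, 0 ≤ w₂ k) (hws₂ : ∑ k, w₂ k = 1)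
    (P₂ : Fin K₂ → Fin N → ℝ) (hP₂ : ∀ k i, 0 ≤ P₂ k i) (hPs₂ : ∀ k, ∑ i, P₂ k i = 1)
    (e₁ e₂ : ℝ)
    (he₁ : e₁ = ∑ k, w₁ k * colMax (by omega) (P₁ k))
    (he₂ : e₂ = ∑ k, w₂ k * colMax (by omega) (P₂ k))
    (hee : e₂ ≤ e₁) (he₁lt : e₁ < 1)
    (hcond : ((1 - e₁) + Real.sqrt (4 * (-(e₁ * Real.logb 2 e₁ +
          (1 - e₁) * Real.logb 2 (1 - e₁))) * (-Real.logb 2 e₁) + (1 - e₁) ^ 2)) /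
        (-2 * Real.logb 2 e₁) ≤ Real.logb 2 N) :
    ∑ k, ∑ i, w₁ k * (-(P₁ k i * Real.logb 2 (P₁ k i))) ≤
      (Real.logb 2 N) ^ 2 * ∑ k, ∑ i, w₂ k * (-(P₂ k i * Real.logb 2 (P₂ k i))) := by
  have hN0 : 0 < N := by omega
  have hl2 : (0:ℝ) < Real.log 2 := Real.log_pos (by norm_num)
  have hNpos : (0:ℝ) < (N:ℝ) := by positivity
  set m₁ : Fin K₁ → ℝ := fun k => colMax hN0 (P₁ k) with hm₁def
  set m₂ : Fin K₂ → ℝ := fun k => colMax hN0 (P₂ k) with hm₂def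
  have he₁' : e₁ = ∑ k, w₁ k * m₁ k := he₁
  have he₂' : e₂ = ∑ k, w₂ k * m₂ k := he₂
  have hm₁ : ∀ k, 1/(N:ℝ) ≤ m₁ k ∧ m₁ k ≤ 1 := fun k =>
    (col_basic hN0 (P₁ k) (hP₁ k) (hPs₁ k)).2
  have hm₂ : ∀ k, 1/(N:ℝ) ≤ m₂ k ∧ m₂ k ≤ 1 := fun k =>
    (col_basic hN0 (P₂ k) (hP₂ k) (hPs₂ k)).2
  have hm₂pos : ∀ k, 0 < m₂ k := fun k => lt_of_lt_of_le (by positivity) (hm₂ k).1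
  have he₂low : 1/(N:ℝ) ≤ e₂ := by
    rw [he₂']
    calc 1/(N:ℝ) = ∑ k, w₂ k * (1/(N:ℝ)) := by rw [← Finset.sum_mul, hws₂]; ring
    _ ≤ ∑ k, w₂ k * m₂ k :=
        Finset.sum_le_sum fun k _ => mul_le_mul_of_nonneg_left (hm₂ k).1 (hw₂ k)
  have he₂pos : 0 < e₂ := lt_of_lt_of_le (by positivity) he₂low
  have he₁pos : 0 < e₁ := lt_of_lt_of_le he₂pos hee
  -- lower bound on second impurity (natural log)
  have hI2 : -(Real.log e₁) ≤ ∑ k, ∑ i, w₂ k * Real.negMulLog (P₂ k i) := by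
    have jensen : ∑ k, w₂ k * Real.log (m₂ k) ≤ Real.log e₂ := by
      have := strictConcaveOn_log_Ioi.concaveOn.le_map_sum (t := univ) (w := w₂) (p := m₂)
        (fun k _ => hw₂ k) hws₂ (fun k _ => Set.mem_Ioi.mpr (hm₂pos k))
      simpa [smul_eq_mul, ← he₂'] using this
    have step : ∀ k, w₂ k * (-(Real.log (m₂ k))) ≤ ∑ i, w₂ k * Real.negMulLog (P₂ k i) := by
      intro k
      rw [← Finset.mul_sum]
      exact mul_le_mul_of_nonneg_left (ent_lower hN0 (P₂ k) (hP₂ k) (hPs₂ k)) (hw₂ k)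
    have hsum_neg : ∑ k, w₂ k * (-(Real.log (m₂ k))) = -(∑ k, w₂ k * Real.log (m₂ k)) := by
      simp [mul_neg]
    have h1 : Real.log e₂ ≤ Real.log e₁ := Real.log_le_log he₂pos hee
    calc -(Real.log e₁) ≤ -(Real.log e₂) := by linarith
      _ ≤ ∑ k, w₂ k * (-(Real.log (m₂ k))) := by rw [hsum_neg]; linarith [jensen]
      _ ≤ ∑ k, ∑ i, w₂ k * Real.negMulLog (P₂ k i) := Finset.sum_le_sum fun k _ => step k
  -- upper bound on first impurity (natural log)
  have hI1 : ∑ k, ∑ i, w₁ k * Real.negMulLog (P₁ k i) ≤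
      Real.negMulLog e₁ + Real.negMulLog (1 - e₁) + (1 - e₁) * Real.log N := by
    have step : ∀ k, ∑ i, w₁ k * Real.negMulLog (P₁ k i) ≤
        w₁ k * (Real.negMulLog (m₁ k) + Real.negMulLog (1 - m₁ k)
          + (1 - m₁ k) * Real.log N) := by
      intro k
      rw [← Finset.mul_sum]
      exact mul_le_mul_of_nonneg_left (ent_upper hN (P₁ k) (hP₁ k) (hPs₁ k) hN0) (hw₁ k)
    have hsum1m : ∑ k, w₁ k * (1 - m₁ k) = 1 - e₁ := by
      rw [he₁']
      simp [mul_sub, Finset.sum_sub_distrib, hws₁]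
    have j1 : ∑ k, w₁ k * Real.negMulLog (m₁ k) ≤ Real.negMulLog e₁ := by
      have := Real.concaveOn_negMulLog.le_map_sum (t := univ) (w := w₁) (p := m₁)
        (fun k _ => hw₁ k) hws₁
        (fun k _ => Set.mem_Ici.mpr (le_trans (by positivity) (hm₁ k).1))
      simpa [smul_eq_mul, ← he₁'] using this
    have j2 : ∑ k, w₁ k * Real.negMulLog (1 - m₁ k) ≤ Real.negMulLog (1 - e₁) := by
      have := Real.concaveOn_negMulLog.le_map_sum (t := univ) (w := w₁)
        (p := fun k => 1 - m₁ k) (fun k _ => hw₁ k) hws₁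
        (fun k _ => Set.mem_Ici.mpr (show (0:ℝ) ≤ 1 - m₁ k by linarith [(hm₁ k).2]))
      simpa [smul_eq_mul, hsum1m] using this
    have j3 : ∑ k, w₁ k * ((1 - m₁ k) * Real.log N) = (1 - e₁) * Real.log N := by
      calc ∑ k, w₁ k * ((1 - m₁ k) * Real.log N)
          = (∑ k, w₁ k * (1 - m₁ k)) * Real.log N := by
            rw [Finset.sum_mul]; exact Finset.sum_congr rfl fun k _ => by ring
        _ = (1 - e₁) * Real.log N := by rw [hsum1m]
    calc ∑ k, ∑ i, w₁ k * Real.negMulLog (P₁ k i)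
        ≤ ∑ k, w₁ k * (Real.negMulLog (m₁ k) + Real.negMulLog (1 - m₁ k)
            + (1 - m₁ k) * Real.log N) := Finset.sum_le_sum fun k _ => step k
      _ = (∑ k, w₁ k * Real.negMulLog (m₁ k)) + (∑ k, w₁ k * Real.negMulLog (1 - m₁ k))
            + ∑ k, w₁ k * ((1 - m₁ k) * Real.log N) := by
          rw [← Finset.sum_add_distrib, ← Finset.sum_add_distrib]
          exact Finset.sum_congr rfl fun k _ => by ring
      _ ≤ _ := by rw [j3]; linarith [j1, j2]
  -- pass to base-2 logarithms
  simp only [Real.logb] at hcond ⊢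
  have lhs_eq : ∑ k, ∑ i, w₁ k * (-(P₁ k i * (Real.log (P₁ k i) / Real.log 2))) =
      (∑ k, ∑ i, w₁ k * Real.negMulLog (P₁ k i)) / Real.log 2 := by
    rw [Finset.sum_div]
    refine Finset.sum_congr rfl fun k _ => ?_
    rw [Finset.sum_div]
    exact Finset.sum_congr rfl fun i _ => by rw [Real.negMulLog]; ring
  have rhs_eq : ∑ k, ∑ i, w₂ k * (-(P₂ k i * (Real.log (P₂ k i) / Real.log 2))) =
      (∑ k, ∑ i, w₂ k * Real.negMulLog (P₂ k i)) / Real.log 2 := by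
    rw [Finset.sum_div]
    refine Finset.sum_congr rfl fun k _ => ?_
    rw [Finset.sum_div]
    exact Finset.sum_congr rfl fun i _ => by rw [Real.negMulLog]; ring
  rw [lhs_eq, rhs_eq]
  set l2 := Real.log 2 with hl2def
  set x := Real.log e₁ with hx
  set y := Real.log (1 - e₁) with hy
  set z := Real.log (N:ℝ) with hz
  set A := ∑ k, ∑ i, w₁ k * Real.negMulLog (P₁ k i) with hA
  set B := ∑ k, ∑ i, w₂ k * Real.negMulLog (P₂ k i) with hB
  rw [Real.negMulLog, Real.negMulLog, ← hx, ← hy] at hI1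
  -- algebraic core
  have hxneg : x < 0 := Real.log_neg he₁pos he₁lt
  have hynp : y ≤ 0 := Real.log_nonpos (by linarith) (by linarith)
  have hx2 : x / l2 < 0 := div_neg_of_neg_of_pos hxneg hl2
  have hy2 : y / l2 ≤ 0 := div_nonpos_of_nonpos_of_nonneg hynp hl2.le
  have hH : 0 ≤ -(e₁ * (x / l2) + (1 - e₁) * (y / l2)) := by
    nlinarith [he₁pos, hx2, hy2, he₁lt]
  have hcond2 : ((1 - e₁) + Real.sqrt (4 * (-(e₁ * (x / l2) + (1 - e₁) * (y / l2))) *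
      (-(x / l2)) + (1 - e₁) ^ 2)) / (2 * (-(x / l2))) ≤ z / l2 := by
    rw [show (2 : ℝ) * (-(x / l2)) = -2 * (x / l2) by ring]
    exact hcond
  have hquad : (1 - e₁) * (z / l2) + (-(e₁ * (x / l2) + (1 - e₁) * (y / l2))) ≤
      (-(x / l2)) * (z / l2) ^ 2 :=
    alg_core (by linarith) hH (by linarith) hcond2
  have h5 : -(x / l2) ≤ B / l2 := by
    rw [← neg_div]
    exact (div_le_div_iff_of_pos_right hl2).mpr hI2
  calc A / l2 ≤ (-e₁ * x + -(1 - e₁) * y + (1 - e₁) * z) / l2 := by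
        apply (div_le_div_iff_of_pos_right hl2).mpr
        linarith [hI1]
    _ = (1 - e₁) * (z / l2) + (-(e₁ * (x / l2) + (1 - e₁) * (y / l2))) := by ring
    _ ≤ (-(x / l2)) * (z / l2) ^ 2 := hquad
    _ ≤ (B / l2) * (z / l2) ^ 2 := mul_le_mul_of_nonneg_right h5 (sq_nonneg _)
    _ = (z / l2) ^ 2 * (B / l2) := by ring
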